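/- Let f : ℝ → ℝ and g, g̃ : ℝ → ℝ be real analytic functions with f(0) = g(0) = g̃(0) = 0 and f not identically zero. If f(x + g(y)) = f(x + g̃(y)) for all x, y ∈ ℝ, then g = g̃. -/
import Mathlib


theorem stmt_1 (f g g' : ℝ → ℝ)
    (hf : ∀ x, AnalyticAt ℝ f x) (hg : ∀ x, AnalyticAt ℝ g x)
    (hg' : ∀ x, AnalyticAt ℝ g' x)
    (hf0 : f 0 = 0) (hg0 : g 0 = 0) (hg'0 : g' 0 = 0)
    (hfne : ¬ ∀ x, f x = 0)
    (heq : ∀ x y : ℝ, f (x + g y) = f (x + g' y)) :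
    g = g' := by
  have hfc : Continuous f := continuous_iff_continuousAt.2 fun x => (hf x).continuousAt
  have hgc : Continuous g := continuous_iff_continuousAt.2 fun x => (hg x).continuousAt
  have hg'c : Continuous g' := continuous_iff_continuousAt.2 fun x => (hg' x).continuousAt
  set P : AddSubgroup ℝ :=
    { carrier := {p | ∀ x, f (x + p) = f x}
      add_mem' := by
        intro a b ha hb x
        have : x + (a + b) = (x + b) + a := by ring
        rw [this, ha, hb]
      zero_mem' := by intro x; simp
      neg_mem' := by
        intro a ha x
        have := ha (x + -a)
        simpa using this.symm } with hP
  have hmem : ∀ y, g y - g' y ∈ P := by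
    intro y x
    have h1 := heq (x - g' y) y
    have e1 : x - g' y + g y = x + (g y - g' y) := by ring
    have e2 : x - g' y + g' y = x := by ring
    rw [e1, e2] at h1
    exact h1
  -- periods are zeros of f
  have hzero : ∀ p ∈ P, f p = 0 := by
    intro p hp
    have := hp 0
    simpa [hf0] using this
  rcases P.dense_or_cyclic with hd | ⟨a, ha⟩
  · exact absurd (fun x => congrFun
      (Continuous.ext_on hd hfc continuous_const (fun p hp => hzero p hp)) x) hfne
  · -- P = closure {a}
    have key : ∀ c ∈ P, c ≠ 0 → |a| ≤ |c| := by
      intro c hc hc0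
      rw [ha, AddSubgroup.mem_closure_singleton] at hc
      obtain ⟨n, hn⟩ := hc
      have hn0 : n ≠ 0 := by rintro rfl; simp at hn; exact hc0 hn.symm
      have : |c| = |n| * |a| := by rw [← hn, abs_zsmul]; simp [abs_mul]
      rw [this]
      have : (1 : ℝ) ≤ |n| := by exact_mod_cast Int.one_le_abs hn0
      nlinarith [abs_nonneg a, abs_nonneg c]
    funext y
    by_contra hne
    set t := g y - g' y with ht
    have ht0 : t ≠ 0 := sub_ne_zero.2 hne
    have ha0 : a ≠ 0 := by
      rintro rfl
      have := hmem y
      rw [ha] at this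
      simp [AddSubgroup.mem_closure_singleton] at this
      exact ht0 this.symm
    have hconth : Continuous (fun z => g z - g' z) := hgc.sub hg'c
    have h0 : (fun z => g z - g' z) 0 = 0 := by simp [hg0, hg'0]
    -- find c strictly between 0 and t with 0 < |c| < |a|
    rcases lt_or_gt_of_ne ht0 with hlt | hgt
    · -- t < 0, take c = max t (-|a|) / 2
      set c := max t (-|a|) / 2 with hc
      have hcneg : c < 0 := by
        have : max t (-|a|) < 0 := max_lt hlt (by simpa using abs_pos.2 ha0)
        linarith
      have hcmem : c ∈ Set.Icc ((fun z => g z - g' z) y) ((fun z => g z - g' z) 0) := by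
        simp only [h0]
        constructor
        · have : t ≤ max t (-|a|) := le_max_left _ _
          simp only [← ht]
          linarith
        · linarith
      obtain ⟨z, hz⟩ := intermediate_value_univ y 0 hconth hcmem
      have hcP : c ∈ P := hz ▸ hmem z
      have := key c hcP (ne_of_lt hcneg)
      have hca : -|a| ≤ max t (-|a|) := le_max_right _ _
      rw [abs_of_neg hcneg] at this
      have : |a| ≤ -(max t (-|a|)) / 2 := by linarith
      linarith [abs_pos.2 ha0]
    · -- t > 0, take c = min t |a| / 2
      set c := min t |a| / 2 with hc
      have hcpos : 0 < c := by
        have : 0 < min t |a| := lt_min hgt (abs_pos.2 ha0)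
        linarith
      have hcmem : c ∈ Set.Icc ((fun z => g z - g' z) 0) ((fun z => g z - g' z) y) := by
        simp only [h0]
        constructor
        · linarith
        · have : min t |a| ≤ t := min_le_left _ _
          simp only [← ht]
          linarith
      obtain ⟨z, hz⟩ := intermediate_value_univ 0 y hconth hcmem
      have hcP : c ∈ P := hz ▸ hmem z
      have := key c hcP (ne_of_gt hcpos)
      rw [abs_of_pos hcpos] at this
      have hca : min t |a| ≤ |a| := min_le_right _ _
      have : |a| ≤ |a| / 2 := by
        calc |a| ≤ min t |a| / 2 := this
        _ ≤ |a| / 2 := by linarith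
      linarith [abs_pos.2 ha0]
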